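/- For a field k of characteristic 0 and n ≥ 1, there is an injective k-algebra homomorphism k[x]/(x^{n+1}) → k[x₁,…,xₙ]/(x₁²,…,xₙ²) sending x to x₁ + ⋯ + xₙ. More generally, k[x₁,…,x_r]/(x₁^{n+1},…,x_r^{n+1}) embeds into k[x_{ij} : 1≤i≤r, 1≤j≤n]/(x_{ij}²) via xᵢ ↦ x_{i1} + ⋯ + x_{in}. -/

import Mathlib

open MvPolynomial Finsupp

section EmbedAux

variable {n r : ℕ}

/-- weight function: each variable `(i,j)` has weight `single i 1`. -/
noncomputable def EW (r n : ℕ) : Fin r × Fin n → (Fin r →₀ ℕ) := fun p => Finsupp.single p.1 1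

/-- block sum of variables -/
noncomputable def ES (R : Type*) [CommSemiring R] (r n : ℕ) (i : Fin r) :
    MvPolynomial (Fin r × Fin n) R := ∑ j : Fin n, X (i, j)

/-- squarefree test monomial for block `i`, first `a` variables -/
noncomputable def Eμ (r n : ℕ) (i : Fin r) (a : ℕ) : (Fin r × Fin n) →₀ ℕ :=
  ∑ j ∈ Finset.univ.filter (fun j : Fin n => (j : ℕ) < a), Finsupp.single (i, j) 1

lemma coeff_mul_ge {σ : Type*} (p q : MvPolynomial σ ℕ) (m₁ m₂ : σ →₀ ℕ) :
    coeff m₁ p * coeff m₂ q ≤ coeff (m₁ + m₂) (p * q) := by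
  classical
  rw [coeff_mul]
  exact Finset.single_le_sum (f := fun x : (σ →₀ ℕ) × (σ →₀ ℕ) => coeff x.1 p * coeff x.2 q)
    (fun _ _ => Nat.zero_le _)
    (show ((m₁, m₂) : (σ →₀ ℕ) × (σ →₀ ℕ)) ∈ Finset.HasAntidiagonal.antidiagonal (m₁ + m₂) from
      Finset.HasAntidiagonal.mem_antidiagonal.mpr rfl)

lemma prod_coeff_le {σ ι : Type*} (s : Finset ι) (m : ι → (σ →₀ ℕ))
    (P : ι → MvPolynomial σ ℕ) :
    (∏ i ∈ s, coeff (m i) (P i)) ≤ coeff (∑ i ∈ s, m i) (∏ i ∈ s, P i) := by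
  classical
  induction s using Finset.induction with
  | empty => simp [MvPolynomial.coeff_one]
  | @insert a s h ih =>
    rw [Finset.prod_insert h, Finset.sum_insert h, Finset.prod_insert h]
    calc coeff (m a) (P a) * ∏ i ∈ s, coeff (m i) (P i)
        ≤ coeff (m a) (P a) * coeff (∑ i ∈ s, m i) (∏ i ∈ s, P i) :=
          Nat.mul_le_mul_left _ ih
      _ ≤ _ := coeff_mul_ge _ _ _ _

lemma one_le_coeff_block (i : Fin r) : ∀ a : ℕ, a ≤ n →
    1 ≤ coeff (Eμ r n i a) ((ES ℕ r n i) ^ a) := by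
  intro a
  induction a with
  | zero =>
    intro _
    simp [Eμ, MvPolynomial.coeff_one]
  | succ a ih =>
    intro ha
    have ha' : a ≤ n := Nat.le_of_succ_le ha
    set j0 : Fin n := ⟨a, ha⟩ with hj0
    have hfilter : Finset.univ.filter (fun j : Fin n => (j : ℕ) < a + 1)
        = insert j0 (Finset.univ.filter (fun j : Fin n => (j : ℕ) < a)) := by
      ext j
      simp only [Finset.mem_filter, Finset.mem_univ, true_and, Finset.mem_insert]
      constructor
      · intro hj
        rcases Nat.lt_succ_iff_lt_or_eq.mp hj with h | h
        · exact Or.inr (by simpa using h)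
        · exact Or.inl (by ext; simpa using h)
      · rintro (rfl | hj)
        · exact Nat.lt_succ_self a
        · exact Nat.lt_succ_of_lt hj
    have hnotmem : j0 ∉ Finset.univ.filter (fun j : Fin n => (j : ℕ) < a) := by
      simp [hj0]
    have hμ : Eμ r n i (a + 1) = Finsupp.single (i, j0) 1 + Eμ r n i a := by
      rw [Eμ, hfilter, Finset.sum_insert hnotmem]; rfl
    have hXcoeff : coeff (Finsupp.single (i, j0) 1) (ES ℕ r n i) = 1 := by
      rw [ES, MvPolynomial.coeff_sum]
      rw [Finset.sum_eq_single j0]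
      · simp [MvPolynomial.coeff_X]
      · intro b _ hb
        rw [MvPolynomial.coeff_X']
        rw [if_neg]
        intro hsingle
        have h2 : ((i, b) : Fin r × Fin n) = (i, j0) :=
          Finsupp.single_left_injective (by norm_num : (1:ℕ) ≠ 0) hsingle
        exact hb (congrArg Prod.snd h2)
      · intro h; exact absurd (Finset.mem_univ j0) h
    calc (1 : ℕ) = 1 * 1 := (one_mul 1).symm
      _ ≤ coeff (Finsupp.single (i, j0) 1) (ES ℕ r n i) * coeff (Eμ r n i a) ((ES ℕ r n i) ^ a) := by
          exact Nat.mul_le_mul (le_of_eq hXcoeff.symm) (ih ha')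
      _ ≤ coeff (Finsupp.single (i, j0) 1 + Eμ r n i a) ((ES ℕ r n i) * (ES ℕ r n i) ^ a) :=
          coeff_mul_ge _ _ _ _
      _ = coeff (Eμ r n i (a + 1)) ((ES ℕ r n i) ^ (a + 1)) := by
          rw [hμ, pow_succ']

lemma ES_homog (R : Type*) [CommSemiring R] (i : Fin r) :
    IsWeightedHomogeneous (EW r n) (ES R r n i) (Finsupp.single i 1) := by
  apply IsWeightedHomogeneous.sum
  intro j _
  simpa [EW] using isWeightedHomogeneous_X R (EW r n) (i, j)

lemma ES_pow_homog (R : Type*) [CommSemiring R] (i : Fin r) (a : ℕ) :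
    IsWeightedHomogeneous (EW r n) ((ES R r n i) ^ a) (Finsupp.single i a) := by
  have h := IsWeightedHomogeneous.prod (Finset.range a) (fun _ => ES R r n i)
    (fun _ => Finsupp.single i 1) (w := EW r n) (fun _ _ => ES_homog R i)
  simpa [Finset.prod_const, Finset.sum_const, Finsupp.smul_single] using h

lemma sum_single_eq (b : Fin r →₀ ℕ) : ∑ i : Fin r, Finsupp.single i (b i) = b := by
  ext j
  rw [Finsupp.finset_sum_apply]
  simp [Finsupp.single_apply]

lemma prod_homog (R : Type*) [CommSemiring R] (b : Fin r →₀ ℕ) :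
    IsWeightedHomogeneous (EW r n) (∏ i : Fin r, (ES R r n i) ^ (b i)) b := by
  have h := IsWeightedHomogeneous.prod Finset.univ (fun i => (ES R r n i) ^ (b i))
    (fun i => Finsupp.single i (b i)) (w := EW r n) (fun i _ => ES_pow_homog R i (b i))
  rwa [sum_single_eq] at h

lemma weight_coord (m : (Fin r × Fin n) →₀ ℕ) (i : Fin r) :
    (Finsupp.weight (EW r n) m) i = ∑ j : Fin n, m (i, j) := by
  rw [Finsupp.weight_apply]
  rw [Finsupp.sum]
  rw [Finsupp.finset_sum_apply]
  have : ∀ p : Fin r × Fin n, (m p • Finsupp.single p.1 (1:ℕ)) i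
      = if p.1 = i then m p else 0 := by
    intro p
    simp [Finsupp.single_apply, EW]
  calc ∑ p ∈ m.support, (m p • Finsupp.single p.1 (1:ℕ)) i
      = ∑ p ∈ m.support, (if p.1 = i then m p else 0) :=
        Finset.sum_congr rfl (fun p _ => this p)
    _ = ∑ p : Fin r × Fin n, (if p.1 = i then m p else 0) := by
        apply Finset.sum_subset (Finset.subset_univ _)
        intro p _ hp
        simp [Finsupp.notMem_support_iff.mp hp]
    _ = ∑ j : Fin n, m (i, j) := by
        rw [Fintype.sum_prod_type]
        rw [Finset.sum_eq_single i]
        · simp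
        · intro b _ hb; simp [hb]
        · simp

end EmbedAux

section More
variable {n r : ℕ}

lemma mem_span_X_pow_iff {σ R : Type*} [CommSemiring R] (e : σ → ℕ) (q : MvPolynomial σ R) :
    q ∈ Ideal.span (Set.range fun p : σ => (X p : MvPolynomial σ R) ^ (e p)) ↔
      ∀ m ∈ q.support, ∃ p, e p ≤ m p := by
  have hrange : (Set.range fun p : σ => (X p : MvPolynomial σ R) ^ (e p))
      = (fun s => monomial s (1 : R)) '' (Set.range fun p : σ => Finsupp.single p (e p)) := by
    rw [← Set.range_comp]
    exact congrArg Set.range (funext fun p => X_pow_eq_monomial)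
  rw [hrange, mem_ideal_span_monomial_image]
  constructor
  · intro h m hm
    obtain ⟨si, ⟨p, rfl⟩, hle⟩ := h m hm
    exact ⟨p, Finsupp.single_le_iff.mp hle⟩
  · intro h m hm
    obtain ⟨p, hp⟩ := h m hm
    exact ⟨_, ⟨p, rfl⟩, Finsupp.single_le_iff.mpr hp⟩

lemma weight_single_one {σ M : Type*} [AddCommMonoid M] (w : σ → M) (p : σ) :
    Finsupp.weight w (Finsupp.single p (1 : ℕ)) = w p := by
  rw [Finsupp.weight_apply, Finsupp.sum_single_index (by simp)]
  simp

lemma card_filter_lt {a : ℕ} (ha : a ≤ n) :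
    (Finset.univ.filter (fun j : Fin n => (j : ℕ) < a)).card = a := by
  have : (Finset.univ.filter (fun j : Fin n => (j : ℕ) < a))
      = (Finset.range a).attachFin (fun m hm => lt_of_lt_of_le (Finset.mem_range.mp hm) ha) := by
    ext j
    simp [Finset.mem_attachFin]
  rw [this, Finset.card_attachFin, Finset.card_range]

lemma Eμ_weight (i : Fin r) {a : ℕ} (ha : a ≤ n) :
    Finsupp.weight (EW r n) (Eμ r n i a) = Finsupp.single i a := by
  rw [Eμ, map_sum]
  rw [Finset.sum_congr rfl (fun j _ => weight_single_one (EW r n) (i, j))]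
  simp only [EW, Finset.sum_const, card_filter_lt ha, Finsupp.smul_single, smul_eq_mul, mul_one]

lemma Eμ_apply (i : Fin r) (a : ℕ) (p : Fin r × Fin n) :
    Eμ r n i a p = if p.1 = i ∧ (p.2 : ℕ) < a then 1 else 0 := by
  rw [Eμ, Finsupp.finset_sum_apply]
  rcases p with ⟨i0, j0⟩
  by_cases h : i0 = i ∧ (j0 : ℕ) < a
  · obtain ⟨rfl, hj⟩ := h
    rw [if_pos ⟨rfl, hj⟩]
    rw [Finset.sum_eq_single j0]
    · simp
    · intro b _ hb
      simp [Finsupp.single_apply, Prod.ext_iff, hb, Ne.symm hb]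
    · intro hmem
      exact absurd (by simpa using hj) hmem
  · rw [if_neg h]
    apply Finset.sum_eq_zero
    intro j hj
    simp only [Finset.mem_filter, Finset.mem_univ, true_and] at hj
    rw [Finsupp.single_apply, if_neg]
    intro heq
    have h1 : i = i0 := congrArg Prod.fst heq
    have h2 : j = j0 := congrArg Prod.snd heq
    exact h ⟨h1.symm, by rw [← h2]; exact hj⟩

end More
section Main

theorem embedding_truncated_polynomials_into_dual_numbers
    (k : Type*) [Field k] [CharZero k] (n r : ℕ) (hn : 1 ≤ n) :
    ∃ φ : (MvPolynomial (Fin r) k ⧸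
        Ideal.span (Set.range fun i : Fin r => (X i : MvPolynomial (Fin r) k) ^ (n + 1)))
      →ₐ[k] (MvPolynomial (Fin r × Fin n) k ⧸
        Ideal.span (Set.range fun p : Fin r × Fin n =>
          (X p : MvPolynomial (Fin r × Fin n) k) ^ 2)),
      Function.Injective φ ∧
      ∀ i : Fin r,
        φ (Ideal.Quotient.mk _ (X i)) =
          Ideal.Quotient.mk _ (∑ j : Fin n, X (i, j)) := by
  classical
  set I : Ideal (MvPolynomial (Fin r) k) :=
    Ideal.span (Set.range fun i : Fin r => (X i : MvPolynomial (Fin r) k) ^ (n + 1)) with hI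
  set J : Ideal (MvPolynomial (Fin r × Fin n) k) :=
    Ideal.span (Set.range fun p : Fin r × Fin n =>
      (X p : MvPolynomial (Fin r × Fin n) k) ^ 2) with hJ
  set Ψ : MvPolynomial (Fin r) k →ₐ[k] MvPolynomial (Fin r × Fin n) k :=
    aeval (fun i : Fin r => ∑ j : Fin n, X (i, j)) with hΨ
  have hΨX : ∀ i : Fin r, Ψ (X i) = ES k r n i := fun i => aeval_X _ i
  have hJ_iff : ∀ q : MvPolynomial (Fin r × Fin n) k,
      q ∈ J ↔ ∀ m ∈ q.support, ∃ p : Fin r × Fin n, 2 ≤ m p := by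
    intro q
    rw [hJ]
    exact mem_span_X_pow_iff (fun _ : Fin r × Fin n => 2) q
  have hI_iff : ∀ q : MvPolynomial (Fin r) k,
      q ∈ I ↔ ∀ m ∈ q.support, ∃ i : Fin r, n + 1 ≤ m i := by
    intro q
    rw [hI]
    exact mem_span_X_pow_iff (fun _ : Fin r => n + 1) q
  -- the generators are killed
  have hgen : ∀ i : Fin r, (ES k r n i) ^ (n + 1) ∈ J := by
    intro i
    rw [hJ_iff]
    intro m hm
    have hdeg : Finsupp.weight (EW r n) m = Finsupp.single i (n + 1) :=
      (ES_pow_homog k i (n + 1)) (MvPolynomial.mem_support_iff.mp hm)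
    have hsum : ∑ j : Fin n, m (i, j) = n + 1 := by
      have := congrArg (fun f : Fin r →₀ ℕ => f i) hdeg
      simpa [weight_coord] using this
    have hlt : ∑ _j : Fin n, (1 : ℕ) < ∑ j : Fin n, m (i, j) := by
      rw [hsum]
      simp only [Finset.sum_const, Finset.card_univ, Fintype.card_fin, smul_eq_mul, mul_one]
      omega
    obtain ⟨j, -, hj⟩ := Finset.exists_lt_of_sum_lt hlt
    exact ⟨(i, j), hj⟩
  have h0 : ∀ a ∈ I, ((Ideal.Quotient.mkₐ k J).comp Ψ) a = 0 := by
    have hle : I ≤ J.comap Ψ.toRingHom := by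
      rw [hI, Ideal.span_le]
      rintro _ ⟨i, rfl⟩
      show Ψ (X i ^ (n + 1)) ∈ J
      rw [map_pow, hΨX]
      exact hgen i
    intro a ha
    rw [AlgHom.comp_apply, Ideal.Quotient.mkₐ_eq_mk, Ideal.Quotient.eq_zero_iff_mem]
    exact hle ha
  -- key injectivity lemma
  have key : ∀ p : MvPolynomial (Fin r) k, Ψ p ∈ J → p ∈ I := by
    intro p hp
    by_contra hpI
    rw [hI_iff] at hpI
    push_neg at hpI
    obtain ⟨a, ha_supp, ha⟩ := hpI
    have ha' : ∀ i : Fin r, a i ≤ n := fun i => by have := ha i; omega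
    set ma : (Fin r × Fin n) →₀ ℕ := ∑ i : Fin r, Eμ r n i (a i) with hma
    have hwma : Finsupp.weight (EW r n) ma = a := by
      rw [hma, map_sum]
      rw [Finset.sum_congr rfl (fun i _ => Eμ_weight i (ha' i))]
      exact sum_single_eq a
    have hma_sf : ∀ p0 : Fin r × Fin n, ma p0 ≤ 1 := by
      intro p0
      rw [hma, Finsupp.finset_sum_apply]
      rw [Finset.sum_congr rfl (fun i _ => Eμ_apply i (a i) p0)]
      rw [Finset.sum_eq_single p0.1]
      · split <;> omega
      · intro b _ hb
        rw [if_neg]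
        rintro ⟨h1, -⟩
        exact hb h1.symm
      · simp
    have hΨp : Ψ p = ∑ b ∈ p.support,
        C (coeff b p) * ∏ i : Fin r, (ES k r n i) ^ (b i) := by
      conv_lhs => rw [as_sum p]
      rw [map_sum]
      refine Finset.sum_congr rfl fun b _ => ?_
      rw [hΨ, aeval_monomial, algebraMap_eq]
      congr 1
      rw [Finsupp.prod_fintype]
      · rfl
      · intro i; exact pow_zero _
    have hcoeff : coeff ma (Ψ p)
        = coeff a p * coeff ma (∏ i : Fin r, (ES k r n i) ^ (a i)) := by
      rw [hΨp, MvPolynomial.coeff_sum]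
      rw [Finset.sum_eq_single a]
      · rw [coeff_C_mul]
      · intro b _ hba
        rw [coeff_C_mul]
        rw [(prod_homog k b).coeff_eq_zero ma (by rw [hwma]; exact fun h => hba h.symm)]
        exact mul_zero _
      · intro h
        exact absurd ha_supp h
    have hmapprod : (∏ i : Fin r, (ES k r n i) ^ (a i))
        = MvPolynomial.map (Nat.castRingHom k) (∏ i : Fin r, (ES ℕ r n i) ^ (a i)) := by
      rw [map_prod]
      refine Finset.prod_congr rfl fun i _ => ?_
      rw [map_pow]
      congr 1
      rw [ES, ES, map_sum]
      refine Finset.sum_congr rfl fun j _ => ?_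
      rw [MvPolynomial.map_X]
    have hpos : 1 ≤ coeff ma (∏ i : Fin r, (ES ℕ r n i) ^ (a i)) := by
      have h1 : (1 : ℕ) ≤ ∏ i : Fin r, coeff (Eμ r n i (a i)) ((ES ℕ r n i) ^ (a i)) :=
        Finset.one_le_prod' fun i _ => one_le_coeff_block i (a i) (ha' i)
      exact le_trans h1 (prod_coeff_le Finset.univ _ _)
    have hne : coeff ma (Ψ p) ≠ 0 := by
      rw [hcoeff, hmapprod, MvPolynomial.coeff_map]
      apply mul_ne_zero
      · exact MvPolynomial.mem_support_iff.mp ha_supp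
      · show (Nat.castRingHom k) _ ≠ 0
        simp only [Nat.coe_castRingHom, Nat.cast_ne_zero]
        omega
    obtain ⟨p0, hp0⟩ := (hJ_iff _).mp hp ma (MvPolynomial.mem_support_iff.mpr hne)
    have := hma_sf p0
    omega
  set f : MvPolynomial (Fin r) k →+* (MvPolynomial (Fin r × Fin n) k ⧸ J) :=
    ((Ideal.Quotient.mkₐ k J).comp Ψ).toRingHom with hf
  have h0' : ∀ a ∈ I, f a = 0 := h0
  refine ⟨Ideal.Quotient.liftₐ I ((Ideal.Quotient.mkₐ k J).comp Ψ) h0, ?_, ?_⟩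
  · have hinj : Function.Injective (Ideal.Quotient.lift I f h0') := by
      apply RingHom.lift_injective_of_ker_le_ideal I h0'
      intro p hp
      rw [RingHom.mem_ker] at hp
      have hJp : Ψ p ∈ J := by
        rw [← Ideal.Quotient.eq_zero_iff_mem]
        exact hp
      exact key p hJp
    intro x y hxy
    apply hinj
    exact hxy
  · intro i
    rw [Ideal.Quotient.liftₐ_apply]
    show Ideal.Quotient.mk J (Ψ (X i)) = _
    rw [hΨ, aeval_X]

end Main
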